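/- Suppose m = m_n and p = p_n satisfy n p → ∞ as n → ∞. For integers k ≥ 5 let N_k = |{ i ∈ [m] : |𝒱(w_i)| ≥ k n p }|. Then the probability that there exists some k ≥ 5 with N_k ≥ e^{−k n p / 2} m is at most Σ_{k=5}^∞ e^{−k n p / 6}, which tends to 0 as n → ∞; in particular, with high probability N_k < e^{−k n p / 2} m simultaneously for all k ≥ 5. -/

import Mathlib

open MeasureTheory Filter Topology
open scoped Classical
open scoped ENNReal

namespace RIG

variable {V : Type*}

/-- The number of edges of a graph. -/
noncomputable def edgeCount [Fintype V] (G : SimpleGraph V) : ℕ := G.edgeSet.ncard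

/-- The number of edges of `G` with both endpoints in `S`. -/
noncomputable def edgesIn [Fintype V] (G : SimpleGraph V) (S : Finset V) : ℕ :=
  {e ∈ G.edgeSet | ∀ v ∈ e, v ∈ S}.ncard

/-- The number of edges of `G` with exactly one endpoint in `S`. -/
noncomputable def crossEdges [Fintype V] (G : SimpleGraph V) (S : Finset V) : ℕ :=
  {e ∈ G.edgeSet | (∃ v ∈ e, v ∈ S) ∧ ∃ v ∈ e, v ∉ S}.ncard

/-- The sum of the degrees (in `G`) of the vertices of `S`. -/
noncomputable def vol [Fintype V] (G : SimpleGraph V) (S : Finset V) : ℕ :=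
  ∑ v ∈ S, G.degree v

/-- The modularity score of a partition of the vertex set. -/
noncomputable def modScore [Fintype V] [DecidableEq V] (G : SimpleGraph V)
    (P : Finpartition (Finset.univ : Finset V)) : ℝ :=
  ∑ S ∈ P.parts,
    ((edgesIn G S : ℝ) / (edgeCount G : ℝ) -
      ((vol G S : ℝ) / (vol G Finset.univ : ℝ)) ^ 2)

/-- The modularity of a graph: the maximum of the modularity scores over all
partitions of the vertex set. -/
noncomputable def modularity [Fintype V] [DecidableEq V] (G : SimpleGraph V) : ℝ :=
  ⨆ P : Finpartition (Finset.univ : Finset V), modScore G P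

/-- The Bernoulli measure on `Bool` with success probability `p`. -/
noncomputable def bernoulliB (p : ℝ) : Measure Bool :=
  ENNReal.ofReal p • Measure.dirac true + ENNReal.ofReal (1 - p) • Measure.dirac false

/-- The law of the attribute assignment of the binomial random intersection graph
`G(n,m,p)`: each vertex chooses each attribute independently with probability `p`. -/
noncomputable def rigMeasure (n m : ℕ) (p : ℝ) : Measure (Fin n → Fin m → Bool) :=
  Measure.pi fun _ => Measure.pi fun _ => bernoulliB p

/-- The intersection graph determined by an attribute assignment: two distinct vertices
are adjacent iff they share an attribute. -/
def rigGraph {n m : ℕ} (ω : Fin n → Fin m → Bool) : SimpleGraph (Fin n) :=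
  SimpleGraph.fromRel fun u v => ∃ i, ω u i = true ∧ ω v i = true

/-- `V_i = |𝒱(w_i)|`, the number of vertices possessing attribute `w_i`. -/
def Vcount {n m : ℕ} (ω : Fin n → Fin m → Bool) (i : Fin m) : ℕ :=
  (Finset.univ.filter fun v : Fin n => ω v i = true).card

/-- `N_k = |{ i ∈ [m] : V_i ≥ k n p }|`. -/
noncomputable def Nbig {n m : ℕ} (ω : Fin n → Fin m → Bool) (k : ℕ) (q : ℝ) : ℕ :=
  (Finset.univ.filter fun i : Fin m => (k : ℝ) * ((n : ℝ) * q) ≤ (Vcount ω i : ℝ)).card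

noncomputable def bb (p : ℝ) : Bool → ℝ≥0∞ := fun x =>
  if x then ENNReal.ofReal p else ENNReal.ofReal (1 - p)

lemma bern_singleton (p : ℝ) (x : Bool) : bernoulliB p {x} = bb p x := by
  cases x <;> simp [bernoulliB, bb, Measure.dirac_apply]

lemma bb_sum (p : ℝ) (h0 : 0 ≤ p) (h1 : p ≤ 1) : bb p true + bb p false = 1 := by
  simp only [bb, if_true, Bool.false_eq_true, if_false]
  rw [← ENNReal.ofReal_add h0 (by linarith)]
  norm_num

instance (p : ℝ) : IsFiniteMeasure (bernoulliB p) := by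
  constructor
  simp only [bernoulliB, Measure.add_apply, Measure.smul_apply, smul_eq_mul,
    Measure.dirac_apply, Set.mem_univ, Set.indicator_of_mem, Pi.one_apply, mul_one]
  exact ENNReal.add_lt_top.2 ⟨ENNReal.ofReal_lt_top, ENNReal.ofReal_lt_top⟩

lemma bern_isProb {p : ℝ} (h0 : 0 ≤ p) (h1 : p ≤ 1) :
    IsProbabilityMeasure (bernoulliB p) := by
  constructor
  simp only [bernoulliB, Measure.add_apply, Measure.smul_apply, smul_eq_mul,
    Measure.dirac_apply, Set.mem_univ, Set.indicator_of_mem, Pi.one_apply, mul_one]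
  rw [← ENNReal.ofReal_add h0 (by linarith)]
  norm_num

lemma pi_singleton {ι : Type*} [Fintype ι] {α : ι → Type*} [∀ i, MeasurableSpace (α i)]
    [∀ i, MeasurableSingletonClass (α i)] (μ : ∀ i, Measure (α i)) [∀ i, SigmaFinite (μ i)]
    (x : ∀ i, α i) : Measure.pi μ {x} = ∏ i, μ i {x i} := by
  rw [show ({x} : Set (∀ i, α i)) = Set.pi Set.univ (fun i => {x i}) by
    ext y
    constructor
    · rintro rfl; intro i _; rfl
    · intro h; exact funext fun i => h i (Set.mem_univ i)]
  exact Measure.pi_pi μ _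

lemma measure_finset_sum {α : Type*} [MeasurableSpace α] [MeasurableSingletonClass α]
    (μ : Measure α) (s : Finset α) : μ s = ∑ x ∈ s, μ {x} := by
  rw [show (s : Set α) = ⋃ x ∈ s, {x} by ext y; simp]
  exact measure_biUnion_finset (fun x _ y _ hxy => by simp [Set.disjoint_singleton, hxy])
    (fun x _ => measurableSet_singleton x)


lemma rig_singleton (n m : ℕ) (p : ℝ) (ω : Fin n → Fin m → Bool) :
    rigMeasure n m p {ω} = ∏ v, ∏ i, bb p (ω v i) := by
  rw [rigMeasure, pi_singleton]
  exact Finset.prod_congr rfl fun v _ => by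
    rw [pi_singleton]
    exact Finset.prod_congr rfl fun i _ => bern_singleton p (ω v i)

lemma col_tail (n m : ℕ) (p : ℝ) (h0 : 0 ≤ p) (h1 : p ≤ 1) (i : Fin m) (a : ℝ)
    (ha : 0 ≤ a) :
    rigMeasure n m p {ω | a ≤ (Vcount ω i : ℝ)} ≤
      ENNReal.ofReal (Real.exp (-(2 * a) + n * (p * (Real.exp 2 - 1)))) := by
  classical
  set g : Bool → ℝ≥0∞ := fun x => if x then ENNReal.ofReal (Real.exp 2) else 1 with hg
  set f : Fin m → Bool → ℝ≥0∞ := fun i' x => (if i' = i then g x else 1) * bb p x with hf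
  set F : Finset (Fin n → Fin m → Bool) :=
    Finset.univ.filter (fun ω => a ≤ (Vcount ω i : ℝ)) with hF
  have hset : {ω : Fin n → Fin m → Bool | a ≤ (Vcount ω i : ℝ)} = ↑F := by
    ext ω; simp [hF]
  -- the f-product identity
  have hprod : ∀ ω : Fin n → Fin m → Bool,
      (∏ v, ∏ i', f i' (ω v i')) =
        (ENNReal.ofReal (Real.exp 2)) ^ (Vcount ω i) * ∏ v, ∏ i', bb p (ω v i') := by
    intro ω
    have h1' : ∀ v : Fin n, (∏ i', f i' (ω v i')) = g (ω v i) * ∏ i', bb p (ω v i') := by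
      intro v
      rw [hf]
      rw [Finset.prod_mul_distrib]
      congr 1
      rw [Finset.prod_ite_eq' Finset.univ i (fun i' => g (ω v i'))]
      simp
    calc (∏ v, ∏ i', f i' (ω v i')) = ∏ v, (g (ω v i) * ∏ i', bb p (ω v i')) :=
          Finset.prod_congr rfl fun v _ => h1' v
      _ = (∏ v, g (ω v i)) * ∏ v, ∏ i', bb p (ω v i') := Finset.prod_mul_distrib
      _ = (ENNReal.ofReal (Real.exp 2)) ^ (Vcount ω i) * ∏ v, ∏ i', bb p (ω v i') := by
          congr 1
          rw [← Finset.prod_filter_mul_prod_filter_not Finset.univ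
            (fun v => ω v i = true) (fun v => g (ω v i))]
          rw [show (∏ v ∈ Finset.univ.filter (fun v => ω v i = true), g (ω v i)) =
              ∏ v ∈ Finset.univ.filter (fun v => ω v i = true),
                ENNReal.ofReal (Real.exp 2) from
            Finset.prod_congr rfl fun v hv => by
              simp only [Finset.mem_filter] at hv
              simp [hg, hv.2]]
          rw [show (∏ v ∈ Finset.univ.filter (fun v => ¬ ω v i = true), g (ω v i)) =
              ∏ v ∈ Finset.univ.filter (fun v => ¬ ω v i = true), (1 : ℝ≥0∞) from
            Finset.prod_congr rfl fun v hv => by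
              simp only [Finset.mem_filter] at hv
              simp [hg, hv.2]]
          simp [Vcount]
  -- sum of all f-products
  have hsum : (∑ ω : Fin n → Fin m → Bool, ∏ v, ∏ i', f i' (ω v i')) ≤
      ENNReal.ofReal (Real.exp (n * (p * (Real.exp 2 - 1)))) := by
    have e1 : (∑ ω : Fin n → Fin m → Bool, ∏ v, ∏ i', f i' (ω v i')) =
        ∏ _v : Fin n, ∑ y : Fin m → Bool, ∏ i', f i' (y i') :=
      (Fintype.prod_sum fun (_ : Fin n) (y : Fin m → Bool) => ∏ i', f i' (y i')).symm
    have e2 : (∑ y : Fin m → Bool, ∏ i', f i' (y i')) =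
        ∏ i' : Fin m, ∑ x : Bool, f i' x :=
      (Fintype.prod_sum fun (i' : Fin m) (x : Bool) => f i' x).symm
    have e3 : ∀ i' : Fin m, (∑ x : Bool, f i' x) =
        if i' = i then ENNReal.ofReal (Real.exp 2 * p + (1 - p)) else 1 := by
      intro i'
      rw [Fintype.sum_bool, hf]
      by_cases h : i' = i
      · simp only [h, if_true, hg, bb]
        simp only [if_true, Bool.false_eq_true, if_false, one_mul]
        rw [← ENNReal.ofReal_mul (Real.exp_nonneg 2),
          ← ENNReal.ofReal_add (by positivity) (by linarith)]
      · simp only [h, if_false, one_mul]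
        exact bb_sum p h0 h1
    have e4 : (∏ i' : Fin m, ∑ x : Bool, f i' x) =
        ENNReal.ofReal (Real.exp 2 * p + (1 - p)) := by
      rw [Finset.prod_congr rfl fun i' _ => e3 i',
        Finset.prod_ite_eq' Finset.univ i
          (fun _ => ENNReal.ofReal (Real.exp 2 * p + (1 - p)))]
      simp
    rw [e1]
    rw [Finset.prod_congr rfl fun v _ => e2]
    rw [Finset.prod_congr rfl fun v _ => e4]
    rw [Finset.prod_const, Finset.card_univ, Fintype.card_fin]
    have hA : ENNReal.ofReal (Real.exp 2 * p + (1 - p)) ≤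
        ENNReal.ofReal (Real.exp (p * (Real.exp 2 - 1))) := by
      apply ENNReal.ofReal_le_ofReal
      have := Real.add_one_le_exp (p * (Real.exp 2 - 1))
      linarith
    calc ENNReal.ofReal (Real.exp 2 * p + (1 - p)) ^ n ≤
          ENNReal.ofReal (Real.exp (p * (Real.exp 2 - 1))) ^ n :=
        pow_le_pow_left₀ zero_le hA n
      _ = ENNReal.ofReal (Real.exp (p * (Real.exp 2 - 1)) ^ n) :=
        (ENNReal.ofReal_pow (Real.exp_nonneg _) n).symm
      _ = ENNReal.ofReal (Real.exp (n * (p * (Real.exp 2 - 1)))) := by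
        rw [Real.exp_nat_mul]
  -- pointwise bound on F
  have hpt : ∀ ω ∈ F, rigMeasure n m p {ω} ≤
      ENNReal.ofReal (Real.exp (-(2 * a))) * ∏ v, ∏ i', f i' (ω v i') := by
    intro ω hω
    rw [rig_singleton, hprod ω, ← mul_assoc]
    apply le_mul_of_one_le_left zero_le
    rw [← ENNReal.ofReal_pow (Real.exp_nonneg 2), ← Real.exp_nat_mul,
      ← ENNReal.ofReal_mul (Real.exp_nonneg _), ← Real.exp_add]
    rw [show (1 : ℝ≥0∞) = ENNReal.ofReal (Real.exp 0) by simp]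
    apply ENNReal.ofReal_le_ofReal
    apply Real.exp_le_exp.2
    have : a ≤ (Vcount ω i : ℝ) := by
      simp only [hF, Finset.mem_filter] at hω
      exact hω.2
    linarith
  calc rigMeasure n m p {ω | a ≤ (Vcount ω i : ℝ)}
      = ∑ ω ∈ F, rigMeasure n m p {ω} := by rw [hset, measure_finset_sum]
    _ ≤ ∑ ω ∈ F, ENNReal.ofReal (Real.exp (-(2 * a))) * ∏ v, ∏ i', f i' (ω v i') :=
        Finset.sum_le_sum hpt
    _ ≤ ∑ ω : Fin n → Fin m → Bool,
          ENNReal.ofReal (Real.exp (-(2 * a))) * ∏ v, ∏ i', f i' (ω v i') :=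
        Finset.sum_le_sum_of_subset (Finset.subset_univ F)
    _ = ENNReal.ofReal (Real.exp (-(2 * a))) *
          ∑ ω : Fin n → Fin m → Bool, ∏ v, ∏ i', f i' (ω v i') := by
        rw [Finset.mul_sum]
    _ ≤ ENNReal.ofReal (Real.exp (-(2 * a))) *
          ENNReal.ofReal (Real.exp (n * (p * (Real.exp 2 - 1)))) := by
        exact mul_le_mul_right hsum _
    _ = ENNReal.ofReal (Real.exp (-(2 * a) + n * (p * (Real.exp 2 - 1)))) := by
        rw [← ENNReal.ofReal_mul (Real.exp_nonneg _), ← Real.exp_add]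


lemma exp_two_le : Real.exp 2 ≤ 7.39 := by
  rw [show (2:ℝ) = 1 + 1 by norm_num, Real.exp_add]
  nlinarith [Real.exp_one_lt_d9, Real.exp_pos 1]

lemma Nbig_tail (n m : ℕ) (p : ℝ) (h0 : 0 ≤ p) (h1 : p ≤ 1) (hm : 1 ≤ m) (k : ℕ)
    (hk : 5 ≤ k) :
    rigMeasure n m p
        {ω | Real.exp (-((k : ℝ) * ((n : ℝ) * p)) / 2) * m ≤ (Nbig ω k p : ℝ)} ≤
      ENNReal.ofReal (Real.exp (-((k : ℝ) * ((n : ℝ) * p)) / 6)) := by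
  classical
  set a : ℝ := (k : ℝ) * ((n : ℝ) * p) with hadef
  have hnp : 0 ≤ (n : ℝ) * p := mul_nonneg (Nat.cast_nonneg n) h0
  have ha : 0 ≤ a := mul_nonneg (Nat.cast_nonneg k) hnp
  set c : ℝ := Real.exp (-a / 2) with hcdef
  set F : Finset (Fin n → Fin m → Bool) :=
    Finset.univ.filter (fun ω => c * m ≤ (Nbig ω k p : ℝ)) with hF
  have hset : {ω : Fin n → Fin m → Bool | c * m ≤ (Nbig ω k p : ℝ)} = ↑F := by
    ext ω; simp [hF]
  set t : ℝ≥0∞ := ENNReal.ofReal c * m with ht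
  have ht0 : t ≠ 0 := by
    apply mul_ne_zero
    · simp [hcdef, Real.exp_pos]
    · exact_mod_cast Nat.one_le_iff_ne_zero.mp hm
  have httop : t ≠ ⊤ := by
    apply ENNReal.mul_ne_top ENNReal.ofReal_ne_top (ENNReal.natCast_ne_top m)
  -- expectation bound
  have key1 : (∑ ω : Fin n → Fin m → Bool,
        rigMeasure n m p {ω} * (Nbig ω k p : ℝ≥0∞)) ≤
      (m : ℝ≥0∞) * ENNReal.ofReal (Real.exp (-(2 * a) + n * (p * (Real.exp 2 - 1)))) := by
    have hcast : ∀ ω : Fin n → Fin m → Bool, (Nbig ω k p : ℝ≥0∞) =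
        ∑ i : Fin m, if a ≤ (Vcount ω i : ℝ) then 1 else 0 := by
      intro ω
      rw [Nbig, Finset.card_filter]
      push_cast
      rfl
    calc (∑ ω : Fin n → Fin m → Bool, rigMeasure n m p {ω} * (Nbig ω k p : ℝ≥0∞))
        = ∑ ω : Fin n → Fin m → Bool, ∑ i : Fin m,
            (if a ≤ (Vcount ω i : ℝ) then rigMeasure n m p {ω} else 0) := by
          refine Finset.sum_congr rfl fun ω _ => ?_
          rw [hcast ω, Finset.mul_sum]
          refine Finset.sum_congr rfl fun i _ => ?_
          by_cases h : a ≤ (Vcount ω i : ℝ)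
          · rw [if_pos h, if_pos h, mul_one]
          · rw [if_neg h, if_neg h, mul_zero]
      _ = ∑ i : Fin m, ∑ ω : Fin n → Fin m → Bool,
            (if a ≤ (Vcount ω i : ℝ) then rigMeasure n m p {ω} else 0) :=
          Finset.sum_comm
      _ = ∑ i : Fin m, rigMeasure n m p {ω | a ≤ (Vcount ω i : ℝ)} := by
          refine Finset.sum_congr rfl fun i _ => ?_
          rw [show {ω : Fin n → Fin m → Bool | a ≤ (Vcount ω i : ℝ)} =
              ↑(Finset.univ.filter fun ω : Fin n → Fin m → Bool =>
                a ≤ (Vcount ω i : ℝ)) by ext ω; simp]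
          rw [measure_finset_sum, Finset.sum_filter]
      _ ≤ ∑ _i : Fin m,
            ENNReal.ofReal (Real.exp (-(2 * a) + n * (p * (Real.exp 2 - 1)))) :=
          Finset.sum_le_sum fun i _ => col_tail n m p h0 h1 i a ha
      _ = (m : ℝ≥0∞) * ENNReal.ofReal (Real.exp (-(2 * a) + n * (p * (Real.exp 2 - 1)))) := by
          rw [Finset.sum_const, Finset.card_univ, Fintype.card_fin, nsmul_eq_mul]
  -- Markov
  have markov : rigMeasure n m p {ω | c * (m:ℝ) ≤ (Nbig ω k p : ℝ)} * t ≤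
      (m : ℝ≥0∞) * ENNReal.ofReal (Real.exp (-(2 * a) + n * (p * (Real.exp 2 - 1)))) := by
    rw [hset, measure_finset_sum, Finset.sum_mul]
    calc (∑ ω ∈ F, rigMeasure n m p {ω} * t)
        ≤ ∑ ω ∈ F, rigMeasure n m p {ω} * (Nbig ω k p : ℝ≥0∞) := by
          refine Finset.sum_le_sum fun ω hω => ?_
          refine mul_le_mul_right ?_ _
          have hωF : c * m ≤ (Nbig ω k p : ℝ) := by
            simp only [hF, Finset.mem_filter] at hω; exact hω.2
          calc t = ENNReal.ofReal (c * m) := by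
                rw [ht, ENNReal.ofReal_mul (Real.exp_nonneg _), ENNReal.ofReal_natCast]
            _ ≤ ENNReal.ofReal (Nbig ω k p : ℝ) := ENNReal.ofReal_le_ofReal hωF
            _ = (Nbig ω k p : ℝ≥0∞) := ENNReal.ofReal_natCast _
      _ ≤ ∑ ω : Fin n → Fin m → Bool, rigMeasure n m p {ω} * (Nbig ω k p : ℝ≥0∞) :=
          Finset.sum_le_sum_of_subset (Finset.subset_univ F)
      _ ≤ _ := key1
  have harith : (m : ℝ≥0∞) *
      ENNReal.ofReal (Real.exp (-(2 * a) + n * (p * (Real.exp 2 - 1)))) ≤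
      ENNReal.ofReal (Real.exp (-a / 6)) * t := by
    have hexp : Real.exp (-(2 * a) + n * (p * (Real.exp 2 - 1))) ≤
        Real.exp (-a / 6 + -a / 2) := by
      apply Real.exp_le_exp.2
      have h2 : Real.exp 2 - 1 ≤ 4 * (k : ℝ) / 3 := by
        have h3 := exp_two_le
        have hk5 : (5 : ℝ) ≤ (k : ℝ) := by exact_mod_cast hk
        nlinarith
      have h4 : (n : ℝ) * (p * (Real.exp 2 - 1)) ≤ 4 * a / 3 := by
        rw [hadef]
        nlinarith [hnp, Real.exp_pos 2]
      linarith
    calc (m : ℝ≥0∞) * ENNReal.ofReal (Real.exp (-(2 * a) + n * (p * (Real.exp 2 - 1))))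
        ≤ (m : ℝ≥0∞) * ENNReal.ofReal (Real.exp (-a / 6 + -a / 2)) :=
          mul_le_mul_right (ENNReal.ofReal_le_ofReal hexp) _
      _ = ENNReal.ofReal (Real.exp (-a / 6)) * t := by
          rw [Real.exp_add, ENNReal.ofReal_mul (Real.exp_nonneg _), ht, hcdef]
          ring
  exact (ENNReal.mul_le_mul_iff_left ht0 httop).1 (markov.trans harith)


lemma union_bound (n m : ℕ) (p : ℝ) (h0 : 0 ≤ p) (h1 : p ≤ 1) (hm : 1 ≤ m) :
    rigMeasure n m p
        {ω | ∃ k : ℕ, 5 ≤ k ∧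
          Real.exp (-((k : ℝ) * ((n : ℝ) * p)) / 2) * m ≤ (Nbig ω k p : ℝ)} ≤
      ∑' j : ℕ, ENNReal.ofReal (Real.exp (-(((j : ℝ) + 5) * ((n : ℝ) * p)) / 6)) := by
  have hE : {ω : Fin n → Fin m → Bool | ∃ k : ℕ, 5 ≤ k ∧
      Real.exp (-((k : ℝ) * ((n : ℝ) * p)) / 2) * m ≤ (Nbig ω k p : ℝ)} =
      ⋃ j : ℕ, {ω : Fin n → Fin m → Bool |
        Real.exp (-(((j + 5 : ℕ) : ℝ) * ((n : ℝ) * p)) / 2) * m ≤ (Nbig ω (j + 5) p : ℝ)} := by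
    ext ω
    simp only [Set.mem_setOf_eq, Set.mem_iUnion]
    constructor
    · rintro ⟨k, hk, h⟩
      obtain ⟨j, rfl⟩ := Nat.exists_eq_add_of_le hk
      exact ⟨j, by rwa [add_comm j 5] ⟩
    · rintro ⟨j, h⟩
      exact ⟨j + 5, by omega, h⟩
  rw [hE]
  refine (measure_iUnion_le _).trans ?_
  refine ENNReal.tsum_le_tsum fun j => ?_
  refine (Nbig_tail n m p h0 h1 hm (j + 5) (by omega)).trans ?_
  apply le_of_eq
  congr 2
  push_cast
  ring


/-- Equation (Eq:Nkduze): if `np → ∞`, then (eventually) the probability that some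
`k ≥ 5` has `N_k ≥ e^{-knp/2} m` is at most `Σ_{k=5}^∞ e^{-knp/6}`; this sum tends
to `0`, and in particular with high probability `N_k < e^{-knp/2} m` simultaneously
for all `k ≥ 5`. -/
theorem Nk_union_bound (m : ℕ → ℕ) (p : ℕ → ℝ)
    (hp : ∀ n, 0 ≤ p n ∧ p n ≤ 1)
    (hm : Tendsto m atTop atTop)
    (hnp : Tendsto (fun n : ℕ => (n : ℝ) * p n) atTop atTop) :
    (∀ᶠ n : ℕ in atTop,
      rigMeasure n (m n) (p n)
          {ω | ∃ k : ℕ, 5 ≤ k ∧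
            Real.exp (-((k : ℝ) * ((n : ℝ) * p n)) / 2) * (m n : ℝ) ≤ (Nbig ω k (p n) : ℝ)} ≤
        ∑' j : ℕ, ENNReal.ofReal (Real.exp (-(((j : ℝ) + 5) * ((n : ℝ) * p n)) / 6))) ∧
    Tendsto (fun n : ℕ =>
        ∑' j : ℕ, ENNReal.ofReal (Real.exp (-(((j : ℝ) + 5) * ((n : ℝ) * p n)) / 6)))
      atTop (nhds 0) ∧
    Tendsto (fun n : ℕ => rigMeasure n (m n) (p n)
        {ω | ∀ k : ℕ, 5 ≤ k →
          (Nbig ω k (p n) : ℝ) < Real.exp (-((k : ℝ) * ((n : ℝ) * p n)) / 2) * (m n : ℝ)})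
      atTop (nhds 1) := by
  have hm1 : ∀ᶠ n : ℕ in atTop, 1 ≤ m n := hm.eventually_ge_atTop 1
  have part1 : ∀ᶠ n : ℕ in atTop,
      rigMeasure n (m n) (p n)
          {ω | ∃ k : ℕ, 5 ≤ k ∧
            Real.exp (-((k : ℝ) * ((n : ℝ) * p n)) / 2) * (m n : ℝ) ≤ (Nbig ω k (p n) : ℝ)} ≤
        ∑' j : ℕ, ENNReal.ofReal (Real.exp (-(((j : ℝ) + 5) * ((n : ℝ) * p n)) / 6)) := by
    filter_upwards [hm1] with n hn
    exact union_bound n (m n) (p n) (hp n).1 (hp n).2 hn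
  have part2 : Tendsto (fun n : ℕ =>
      ∑' j : ℕ, ENNReal.ofReal (Real.exp (-(((j : ℝ) + 5) * ((n : ℝ) * p n)) / 6)))
      atTop (nhds 0) := by
    have hub : ∀ᶠ n : ℕ in atTop,
        (∑' j : ℕ, ENNReal.ofReal (Real.exp (-(((j : ℝ) + 5) * ((n : ℝ) * p n)) / 6))) ≤
          ENNReal.ofReal (Real.exp (-(5 * ((n : ℝ) * p n)) / 6)) * 2 := by
      filter_upwards [hnp.eventually_ge_atTop 6] with n hn
      set c : ℝ := (n : ℝ) * p n with hc
      have hterm : ∀ j : ℕ,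
          ENNReal.ofReal (Real.exp (-(((j : ℝ) + 5) * c) / 6)) =
            ENNReal.ofReal (Real.exp (-(5 * c) / 6)) *
              ENNReal.ofReal (Real.exp (-c / 6)) ^ j := by
        intro j
        rw [← ENNReal.ofReal_pow (Real.exp_nonneg _), ← Real.exp_nat_mul,
          ← ENNReal.ofReal_mul (Real.exp_nonneg _), ← Real.exp_add]
        congr 1
        ring
      calc (∑' j : ℕ, ENNReal.ofReal (Real.exp (-(((j : ℝ) + 5) * c) / 6)))
          = ENNReal.ofReal (Real.exp (-(5 * c) / 6)) *
              ∑' j : ℕ, ENNReal.ofReal (Real.exp (-c / 6)) ^ j := by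
            rw [← ENNReal.tsum_mul_left]
            exact tsum_congr hterm
        _ ≤ ENNReal.ofReal (Real.exp (-(5 * c) / 6)) * 2 := by
            refine mul_le_mul_right ?_ _
            rw [ENNReal.tsum_geometric]
            have hr : ENNReal.ofReal (Real.exp (-c / 6)) ≤ 2⁻¹ := by
              have h1 : Real.exp (-c / 6) ≤ Real.exp (-1) := by
                apply Real.exp_le_exp.2; linarith
              have h2 : Real.exp (-1) ≤ 1 / 2 := by
                rw [Real.exp_neg]
                rw [div_eq_inv_mul, mul_one]
                apply inv_anti₀ (by norm_num)
                have := Real.add_one_le_exp 1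
                linarith
              refine (ENNReal.ofReal_le_ofReal (h1.trans h2)).trans ?_
              rw [ENNReal.ofReal_div_of_pos (by norm_num)]
              simp
            have hsub : (2 : ℝ≥0∞)⁻¹ ≤ 1 - ENNReal.ofReal (Real.exp (-c / 6)) := by
              have := tsub_le_tsub (le_refl (1 : ℝ≥0∞)) hr
              calc (2 : ℝ≥0∞)⁻¹ = 1 - 2⁻¹ := by
                    rw [ENNReal.one_sub_inv_two]
                _ ≤ 1 - ENNReal.ofReal (Real.exp (-c / 6)) := tsub_le_tsub le_rfl hr
            calc (1 - ENNReal.ofReal (Real.exp (-c / 6)))⁻¹ ≤ ((2 : ℝ≥0∞)⁻¹)⁻¹ :=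
                  ENNReal.inv_le_inv' hsub
              _ = 2 := by rw [inv_inv]
    have hlim : Tendsto (fun n : ℕ =>
        ENNReal.ofReal (Real.exp (-(5 * ((n : ℝ) * p n)) / 6)) * 2) atTop (nhds 0) := by
      have hre : Tendsto (fun n : ℕ => Real.exp (-(5 * ((n : ℝ) * p n)) / 6)) atTop (nhds 0) := by
        have hneg : Tendsto (fun n : ℕ => -(5 * ((n : ℝ) * p n)) / 6) atTop atBot :=
          ((tendsto_const_mul_atBot_of_neg (by norm_num : (-5/6 : ℝ) < 0)).2 hnp).congr
            (fun n => by ring)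
        exact Real.tendsto_exp_atBot.comp hneg
      have : Tendsto (fun n : ℕ =>
          ENNReal.ofReal (Real.exp (-(5 * ((n : ℝ) * p n)) / 6))) atTop (nhds 0) := by
        rw [show (0 : ℝ≥0∞) = ENNReal.ofReal 0 by simp]
        exact (ENNReal.continuous_ofReal.tendsto 0).comp hre
      simpa using ENNReal.Tendsto.mul_const this (Or.inr ENNReal.ofNat_ne_top)
    exact tendsto_of_tendsto_of_tendsto_of_le_of_le' tendsto_const_nhds hlim
      (Eventually.of_forall fun n => zero_le) hub
  refine ⟨part1, part2, ?_⟩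
  have hbad0 : Tendsto (fun n : ℕ => rigMeasure n (m n) (p n)
      {ω | ∃ k : ℕ, 5 ≤ k ∧
        Real.exp (-((k : ℝ) * ((n : ℝ) * p n)) / 2) * (m n : ℝ) ≤ (Nbig ω k (p n) : ℝ)})
      atTop (nhds 0) :=
    tendsto_of_tendsto_of_tendsto_of_le_of_le' tendsto_const_nhds part2
      (Eventually.of_forall fun n => zero_le) part1
  have heq : ∀ n : ℕ, rigMeasure n (m n) (p n)
      {ω | ∀ k : ℕ, 5 ≤ k →
        (Nbig ω k (p n) : ℝ) < Real.exp (-((k : ℝ) * ((n : ℝ) * p n)) / 2) * (m n : ℝ)} =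
      1 - rigMeasure n (m n) (p n)
      {ω | ∃ k : ℕ, 5 ≤ k ∧
        Real.exp (-((k : ℝ) * ((n : ℝ) * p n)) / 2) * (m n : ℝ) ≤ (Nbig ω k (p n) : ℝ)} := by
    intro n
    haveI : IsProbabilityMeasure (bernoulliB (p n)) := bern_isProb (hp n).1 (hp n).2
    haveI : IsProbabilityMeasure (rigMeasure n (m n) (p n)) := by
      unfold rigMeasure; infer_instance
    have hcompl : {ω : Fin n → Fin (m n) → Bool | ∀ k : ℕ, 5 ≤ k →
        (Nbig ω k (p n) : ℝ) < Real.exp (-((k : ℝ) * ((n : ℝ) * p n)) / 2) * (m n : ℝ)} =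
        {ω : Fin n → Fin (m n) → Bool | ∃ k : ℕ, 5 ≤ k ∧
          Real.exp (-((k : ℝ) * ((n : ℝ) * p n)) / 2) * (m n : ℝ) ≤ (Nbig ω k (p n) : ℝ)}ᶜ := by
      ext ω
      simp only [Set.mem_setOf_eq, Set.mem_compl_iff, not_exists, not_and, not_le]
    rw [hcompl]
    exact prob_compl_eq_one_sub ((Set.to_countable _).measurableSet)
  have hfin := ENNReal.Tendsto.sub (tendsto_const_nhds (x := (1 : ℝ≥0∞))) hbad0
    (Or.inl ENNReal.one_ne_top)
  rw [tsub_zero] at hfin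
  exact Tendsto.congr (fun n => (heq n).symm) hfin

end RIG
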